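/- Let Δ ∈ ℝ, and for θ ∈ ℝ set a(θ) = (θ - Δ)/2 and c(θ) = (θ + Δ)/2. Let b_n(θ) and u_n(θ) be the odd-case para-Racah recurrence coefficients with parameters a = a(θ), c = c(θ) and α = 1/2. Then as θ → +∞: for every n ∈ {0,…,N}, -(2 b_n(θ) + 2 a(θ)²)/θ tends to (N - 1 + 2Δ)/2; and for every n ∈ {1,…,N}, 4 u_n(θ)/θ² tends to n(N+1-n)(2n-N-1-2Δ)(2n-N-1+2Δ)/(4(2n-N)(2n-N-2)), the recurrence coefficients of the monic para-Krawtchouk polynomials. -/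

import Mathlib

open Filter Topology Polynomial

noncomputable section

/-- The recurrence coefficient `bₙ` of the para-Racah polynomials, odd case `N = 2j+1`. -/
def bOdd (j : ℕ) (a c α : ℝ) (n : ℕ) : ℝ :=
  if n = j then
    -a ^ 2 - (j : ℝ) * (1 + a - c) * (1 + a + c + j) / 2 + α * (a - c) * (1 + (j : ℝ)) * (a + c + j)
  else if n = j + 1 then
    -a ^ 2 - (j : ℝ) * (1 + a - c) * (1 + a + c + j) / 2
      + (1 - α) * (a - c) * (1 + (j : ℝ)) * (a + c + j)
  else
    -(a * (a + j) + c * (c + j) + (n : ℝ) * ((2 * (j : ℝ) + 1) - n)) / 2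

/-- The recurrence coefficient `uₙ` of the para-Racah polynomials, odd case `N = 2j+1`. -/
def uOdd (j : ℕ) (a c α : ℝ) (n : ℕ) : ℝ :=
  if n = j + 1 then
    α * (1 - α) * (a - c) ^ 2 * (1 + (j : ℝ)) ^ 2 * (a + c + j) ^ 2
  else
    (n : ℝ) * ((2 * (j : ℝ) + 1) + 1 - n) * ((2 * (j : ℝ) + 1) - n + a + c) * ((n : ℝ) - 1 + a + c)
        * (((n : ℝ) - j - 1) ^ 2 - (a - c) ^ 2) /
      (4 * ((2 * (j : ℝ) + 1) - 2 * n) * ((2 * (j : ℝ) + 1) - 2 * n + 2))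

private lemma auxTendsto (C₀ C₁ C₂ : ℝ) :
    Tendsto (fun θ : ℝ => C₀ + C₁ * θ⁻¹ + C₂ * (θ⁻¹ * θ⁻¹)) atTop (𝓝 C₀) := by
  have h : Tendsto (fun θ : ℝ => θ⁻¹) atTop (𝓝 0) := tendsto_inv_atTop_zero
  have h0 : Tendsto (fun _ : ℝ => C₀) atTop (𝓝 C₀) := tendsto_const_nhds
  have h1 : Tendsto (fun _ : ℝ => C₁) atTop (𝓝 C₁) := tendsto_const_nhds
  have h2 : Tendsto (fun _ : ℝ => C₂) atTop (𝓝 C₂) := tendsto_const_nhds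
  simpa using (h0.add (h1.mul h)).add (h2.mul (h.mul h))

private lemma oddNe (j n : ℕ) : (2 * (j : ℝ) + 1 - 2 * n) ≠ 0 := by
  intro h0
  have : (2 * (j : ℤ) + 1) = 2 * n := by
    exact_mod_cast (by linarith : (2 * (j : ℝ) + 1) = 2 * (n : ℝ))
  omega

private lemma oddNe' (j n : ℕ) : (2 * (j : ℝ) + 1 - 2 * n + 2) ≠ 0 := by
  intro h0
  have : (2 * (j : ℤ) + 3) = 2 * n := by
    exact_mod_cast (by linarith : (2 * (j : ℝ) + 3) = 2 * (n : ℝ))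
  omega

private lemma keyDiv (θ : ℝ) (hθ : θ ≠ 0) (C₀ C₁ C₂ : ℝ) :
    C₀ + C₁ * θ⁻¹ + C₂ * (θ⁻¹ * θ⁻¹) = (C₀ * θ ^ 2 + C₁ * θ + C₂) / θ ^ 2 := by
  field_simp

set_option maxHeartbeats 1000000 in
theorem paraRacahOdd_to_paraKrawtchouk (j : ℕ) (Δ : ℝ) :
    (∀ n : ℕ, n ≤ 2 * j + 1 →
      Tendsto (fun θ : ℝ =>
          -(2 * bOdd j ((θ - Δ) / 2) ((θ + Δ) / 2) (1 / 2) n + 2 * ((θ - Δ) / 2) ^ 2) / θ)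
        atTop (𝓝 (((2 * (j : ℝ) + 1) - 1 + 2 * Δ) / 2))) ∧
    (∀ n : ℕ, 1 ≤ n → n ≤ 2 * j + 1 →
      Tendsto (fun θ : ℝ =>
          4 * uOdd j ((θ - Δ) / 2) ((θ + Δ) / 2) (1 / 2) n / θ ^ 2)
        atTop (𝓝 ((n : ℝ) * ((2 * (j : ℝ) + 1) + 1 - n)
          * (2 * (n : ℝ) - (2 * (j : ℝ) + 1) - 1 - 2 * Δ)
          * (2 * (n : ℝ) - (2 * (j : ℝ) + 1) - 1 + 2 * Δ) /
          (4 * (2 * (n : ℝ) - (2 * (j : ℝ) + 1)) * (2 * (n : ℝ) - (2 * (j : ℝ) + 1) - 2))))) := by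
  constructor
  · intro n _
    have htarget : ((2 * (j : ℝ) + 1) - 1 + 2 * Δ) / 2 = (j : ℝ) + Δ := by ring
    rw [htarget]
    by_cases h1 : n = j
    · refine (auxTendsto ((j : ℝ) + Δ) ((j : ℝ) * (1 + j)) 0).congr' ?_
      filter_upwards [eventually_ne_atTop (0 : ℝ)] with θ hθ
      simp only [bOdd, h1, if_pos rfl, if_true]
      field_simp
      ring
    · by_cases h2 : n = j + 1
      · refine (auxTendsto ((j : ℝ) + Δ) ((j : ℝ) * (1 + j)) 0).congr' ?_
        filter_upwards [eventually_ne_atTop (0 : ℝ)] with θ hθ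
        simp only [bOdd, h1, h2, if_neg, if_pos rfl, Nat.succ_ne_self, if_false, if_true]
        field_simp
        ring
      · refine (auxTendsto ((j : ℝ) + Δ) ((n : ℝ) * (2 * (j : ℝ) + 1 - n)) 0).congr' ?_
        filter_upwards [eventually_ne_atTop (0 : ℝ)] with θ hθ
        simp only [bOdd, h1, h2, if_neg, if_false]
        field_simp
        ring
  · intro n _ _
    by_cases h1 : n = j + 1
    · subst h1
      have htarget : ((j : ℕ) + 1 : ℕ) = ((j : ℝ) + 1 : ℝ) := by push_cast; ring
      have ht : (((j : ℕ) + 1 : ℕ) : ℝ) * ((2 * (j : ℝ) + 1) + 1 - ((j : ℕ) + 1 : ℕ))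
          * (2 * (((j : ℕ) + 1 : ℕ) : ℝ) - (2 * (j : ℝ) + 1) - 1 - 2 * Δ)
          * (2 * (((j : ℕ) + 1 : ℕ) : ℝ) - (2 * (j : ℝ) + 1) - 1 + 2 * Δ) /
          (4 * (2 * (((j : ℕ) + 1 : ℕ) : ℝ) - (2 * (j : ℝ) + 1))
            * (2 * (((j : ℕ) + 1 : ℕ) : ℝ) - (2 * (j : ℝ) + 1) - 2))
          = Δ ^ 2 * (1 + (j : ℝ)) ^ 2 := by push_cast; ring
      rw [ht]
      refine (auxTendsto (Δ ^ 2 * (1 + (j : ℝ)) ^ 2)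
          (2 * (j : ℝ) * (Δ ^ 2 * (1 + (j : ℝ)) ^ 2))
          ((j : ℝ) ^ 2 * (Δ ^ 2 * (1 + (j : ℝ)) ^ 2))).congr' ?_
      filter_upwards [eventually_ne_atTop (0 : ℝ)] with θ hθ
      simp only [uOdd, if_pos rfl]
      rw [keyDiv θ hθ, div_eq_div_iff (pow_ne_zero 2 hθ) (pow_ne_zero 2 hθ)]
      push_cast
      ring
    · set T : ℝ := (n : ℝ) * ((2 * (j : ℝ) + 1) + 1 - n)
          * (2 * (n : ℝ) - (2 * (j : ℝ) + 1) - 1 - 2 * Δ)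
          * (2 * (n : ℝ) - (2 * (j : ℝ) + 1) - 1 + 2 * Δ) /
          (4 * (2 * (n : ℝ) - (2 * (j : ℝ) + 1)) * (2 * (n : ℝ) - (2 * (j : ℝ) + 1) - 2))
        with hT
      refine (auxTendsto T (2 * (j : ℝ) * T)
          ((2 * (j : ℝ) + 1 - n) * ((n : ℝ) - 1) * T)).congr' ?_
      have hd1 := oddNe j n
      have hd2 := oddNe' j n
      have hd1' : (2 * (n : ℝ) - (2 * (j : ℝ) + 1)) ≠ 0 := fun h => hd1 (by linarith)
      have hd2' : (2 * (n : ℝ) - (2 * (j : ℝ) + 1) - 2) ≠ 0 := fun h => hd2 (by linarith)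
      filter_upwards [eventually_ne_atTop (0 : ℝ)] with θ hθ
      simp only [uOdd, if_neg h1]
      rw [hT]
      field_simp
      ring
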